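/- Every vertex of the polytope P'(G,w) = { y ∈ ℝ^E : y ≥ 0, flow conservation at every vertex, ∑_e w_e y_e = 0, ∑_e y_e = 1 } is either (a) χ(C)/|C| for a simple directed cycle C with w(C) = 0, or (b) μ·χ(C₁) + μ'·χ(C₂) for a 2-cycle (C₁,C₂), where μ = w(C₂)/(w(C₂)|C₁| - w(C₁)|C₂|) and μ' = -w(C₁)/(w(C₂)|C₁| - w(C₁)|C₂|). -/
import Mathlib

open Finset

/-- A simple directed cycle, identified with its arc set: the arcs
`(f i, f (i+1))` of an injective map `f : ZMod (n+1) → V`. -/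
def IsCycle {V : Type} [DecidableEq V] (C : Finset (V × V)) : Prop :=
  ∃ (n : ℕ) (f : ZMod (n + 1) → V), Function.Injective f ∧
    C = Finset.image (fun i => (f i, f (i + 1))) Finset.univ

/-- Characteristic vector of an arc set. -/
def chi {V : Type} [DecidableEq V] (C : Finset (V × V)) : V × V → ℝ :=
  fun e => if e ∈ C then 1 else 0

/-- Membership in the polyhedron `P(G,w)` of negative-weight flows:
nonnegativity, support in `E`, flow conservation at every vertex, and
total weight `-1`. -/
def memP {V : Type} [Fintype V] [DecidableEq V] (E : Finset (V × V))
    (w : V × V → ℝ) (y : V × V → ℝ) : Prop :=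
  (∀ e, 0 ≤ y e) ∧ (∀ e, e ∉ E → y e = 0) ∧
  (∀ u : V, ∑ e ∈ E.filter (fun e => e.1 = u), y e
          = ∑ e ∈ E.filter (fun e => e.2 = u), y e) ∧
  (∑ e ∈ E, w e * y e = -1)

/-- A vertex (extreme point) of a convex set: a member which is not a proper
convex combination of two distinct members. -/
def IsVertexOf {α : Type*} [AddCommGroup α] [Module ℝ α] (P : Set α) (y : α) : Prop :=
  y ∈ P ∧ ¬ ∃ y₁ ∈ P, ∃ y₂ ∈ P, y₁ ≠ y₂ ∧
    ∃ t : ℝ, 0 < t ∧ t < 1 ∧ y = t • y₁ + (1 - t) • y₂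

/-- Membership in the polytope `P'(G,w)`: nonnegativity, support in `E`, flow
conservation, total weight `0`, and normalization `∑ y = 1`. -/
def memP' {V : Type} [Fintype V] [DecidableEq V] (E : Finset (V × V))
    (w : V × V → ℝ) (y : V × V → ℝ) : Prop :=
  (∀ e, 0 ≤ y e) ∧ (∀ e, e ∉ E → y e = 0) ∧
  (∀ u : V, ∑ e ∈ E.filter (fun e => e.1 = u), y e
          = ∑ e ∈ E.filter (fun e => e.2 = u), y e) ∧
  (∑ e ∈ E, w e * y e = 0) ∧ (∑ e ∈ E, y e = 1)

/-- A 2-cycle: a negative cycle and a positive cycle whose union contains no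
other cycle. -/
def IsTwoCycle {V : Type} [Fintype V] [DecidableEq V] (E : Finset (V × V))
    (w : V × V → ℝ) (C₁ C₂ : Finset (V × V)) : Prop :=
  IsCycle C₁ ∧ IsCycle C₂ ∧ C₁ ⊆ E ∧ C₂ ⊆ E ∧
  (∑ e ∈ C₁, w e) < 0 ∧ 0 < (∑ e ∈ C₂, w e) ∧
  ∀ C : Finset (V × V), IsCycle C → C ⊆ C₁ ∪ C₂ → C = C₁ ∨ C = C₂

set_option linter.unusedSectionVars false
set_option maxHeartbeats 1000000

section Aux
variable {V : Type} [DecidableEq V]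

lemma arc_inj {n : ℕ} {f : ZMod (n+1) → V} (hf : Function.Injective f) :
    Function.Injective (fun i : ZMod (n+1) => (f i, f (i+1))) := by
  intro a b h
  exact hf (congrArg Prod.fst h)

lemma cycle_card_pos {C : Finset (V × V)} (hC : IsCycle C) : 0 < C.card := by
  obtain ⟨n, f, hf, rfl⟩ := hC
  rw [Finset.card_image_of_injective _ (arc_inj hf)]
  simp [ZMod.card]

lemma cycle_out_in_card {n : ℕ} {f : ZMod (n+1) → V} (hf : Function.Injective f) (u : V) :
    ((Finset.image (fun i => (f i, f (i + 1))) Finset.univ).filter (fun e => e.1 = u)).card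
  = ((Finset.image (fun i => (f i, f (i + 1))) Finset.univ).filter (fun e => e.2 = u)).card := by
  rw [Finset.filter_image, Finset.filter_image,
    Finset.card_image_of_injective _ (arc_inj hf),
    Finset.card_image_of_injective _ (arc_inj hf)]
  apply Finset.card_bij (fun i _ => i - 1)
  · intro a ha; simp only [Finset.mem_filter, Finset.mem_univ, true_and] at ha ⊢
    rw [sub_add_cancel]; exact ha
  · intro a _ b _ h; exact sub_left_injective h
  · intro b hb; simp only [Finset.mem_filter, Finset.mem_univ, true_and] at hb ⊢
    exact ⟨b + 1, hb, by ring⟩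

lemma filter_inter_eq {C E : Finset (V × V)} (hCE : C ⊆ E) (p : V × V → Prop)
    [DecidablePred p] : (E.filter p).filter (· ∈ C) = C.filter p := by
  ext e; simp only [Finset.mem_filter]
  exact ⟨fun h => ⟨h.2, h.1.2⟩, fun h => ⟨⟨hCE h.1, h.2⟩, h.1⟩⟩

lemma sum_chi (s C : Finset (V × V)) : ∑ e ∈ s, chi C e = ((s.filter (· ∈ C)).card : ℝ) := by
  unfold chi; rw [Finset.sum_boole]

lemma sum_chi_subset {C E : Finset (V × V)} (hCE : C ⊆ E) :
    ∑ e ∈ E, chi C e = (C.card : ℝ) := by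
  rw [sum_chi]; congr 2
  rw [Finset.filter_mem_eq_inter, Finset.inter_eq_right.mpr hCE]

lemma sum_mul_chi {C E : Finset (V × V)} (hCE : C ⊆ E) (w : V × V → ℝ) :
    ∑ e ∈ E, w e * chi C e = ∑ e ∈ C, w e := by
  unfold chi
  rw [Finset.sum_congr rfl (fun e _ => by rw [mul_ite, mul_one, mul_zero]),
    Finset.sum_ite_mem, Finset.inter_eq_right.mpr hCE]

lemma chi_conserv [Fintype V] {C E : Finset (V × V)} (hC : IsCycle C) (hCE : C ⊆ E) (u : V) :
    ∑ e ∈ E.filter (fun e => e.1 = u), chi C e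
  = ∑ e ∈ E.filter (fun e => e.2 = u), chi C e := by
  rw [sum_chi, sum_chi, filter_inter_eq hCE, filter_inter_eq hCE]
  obtain ⟨n, f, hf, rfl⟩ := hC
  exact_mod_cast congrArg (Nat.cast : ℕ → ℝ) (cycle_out_in_card hf u)

lemma cycle_subset {C C' : Finset (V × V)} (h : IsCycle C) (h' : IsCycle C')
    (hsub : C ⊆ C') : C = C' := by
  classical
  obtain ⟨n, f, hf, rfl⟩ := h
  obtain ⟨m, g, hg, rfl⟩ := h'
  have key : ∀ i : ZMod (n + 1), ∃ b : ZMod (m + 1), g b = f i ∧ g (b + 1) = f (i + 1) := by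
    intro i
    have : (f i, f (i + 1)) ∈ Finset.image (fun b => (g b, g (b + 1))) Finset.univ :=
      hsub (Finset.mem_image.mpr ⟨i, Finset.mem_univ _, rfl⟩)
    obtain ⟨b, _, hb⟩ := Finset.mem_image.mp this
    exact ⟨b, congrArg Prod.fst hb, congrArg Prod.snd hb⟩
  choose j hj1 hj2 using key
  have hjsucc : ∀ i, j (i + 1) = j i + 1 := by
    intro i
    apply hg
    rw [hj1, hj2]
  have hjinj : Function.Injective j := by
    intro a b hab
    apply hf
    rw [← hj1, ← hj1, hab]
  have hJ : ∀ k : ℕ, j ((k : ZMod (n + 1))) = j 0 + (k : ZMod (m + 1)) := by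
    intro k
    induction k with
    | zero => simp
    | succ k ih =>
      push_cast
      rw [hjsucc, ih]
      push_cast
      ring
  have hdvd : (m + 1) ∣ (n + 1) := by
    have h1 : j ((n + 1 : ℕ) : ZMod (n + 1)) = j 0 := by
      rw [ZMod.natCast_self]
    rw [hJ (n + 1)] at h1
    have h2 : ((n + 1 : ℕ) : ZMod (m + 1)) = 0 := by
      have h1' : j 0 + ((n + 1 : ℕ) : ZMod (m + 1)) = j 0 + 0 := by rw [h1, add_zero]
      exact add_left_cancel h1'
    exact (ZMod.natCast_eq_zero_iff _ _).mp h2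
  have hle : n + 1 ≤ m + 1 := by
    have := Fintype.card_le_of_injective j hjinj
    simpa [ZMod.card] using this
  have heq : m + 1 = n + 1 := le_antisymm (Nat.le_of_dvd (by omega) hdvd) hle
  have hbij : Function.Bijective j := by
    rw [Fintype.bijective_iff_injective_and_card]
    exact ⟨hjinj, by simp [ZMod.card, heq]⟩
  apply Finset.Subset.antisymm hsub
  intro e he
  obtain ⟨b, _, rfl⟩ := Finset.mem_image.mp he
  obtain ⟨i, rfl⟩ := hbij.surjective b
  exact Finset.mem_image.mpr ⟨i, Finset.mem_univ _, by rw [hj1, hj2]⟩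

end Aux

section Flow
variable {V : Type} [Fintype V] [DecidableEq V]

lemma exists_cycle_supp {E : Finset (V × V)} {g : V × V → ℝ}
    (hg0 : ∀ e, 0 ≤ g e) (hsupp : ∀ e, e ∉ E → g e = 0)
    (hcons : ∀ u : V, ∑ e ∈ E.filter (fun e => e.1 = u), g e
                    = ∑ e ∈ E.filter (fun e => e.2 = u), g e)
    {e₀ : V × V} (he₀ : 0 < g e₀) :
    ∃ C : Finset (V × V), IsCycle C ∧ ∀ e ∈ C, 0 < g e := by
  classical
  have memE : ∀ e : V × V, 0 < g e → e ∈ E := by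
    intro e he
    by_contra h; rw [hsupp e h] at he; exact lt_irrefl _ he
  set good : V → Prop := fun u => ∃ v, 0 < g (u, v) with hgood
  have step : ∀ u : V, (∃ v, 0 < g (v, u)) → good u := by
    intro u ⟨v, hv⟩
    have hin : 0 < ∑ e ∈ E.filter (fun e => e.2 = u), g e := by
      have hm : (v, u) ∈ E.filter (fun e => e.2 = u) := by
        simp [Finset.mem_filter, memE _ hv]
      calc (0:ℝ) < g (v, u) := hv
        _ ≤ _ := Finset.single_le_sum (fun e _ => hg0 e) hm
    rw [← hcons u] at hin
    obtain ⟨e, he, hpos⟩ := Finset.exists_lt_of_sum_lt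
      (by simpa using hin : ∑ e ∈ E.filter (fun e => e.1 = u), (0:ℝ) < _)
    refine ⟨e.2, ?_⟩
    have : e.1 = u := (Finset.mem_filter.mp he).2
    rw [← this]; exact hpos
  set next : V → V := fun u => if h : good u then h.choose else u with hnext
  have nextQ : ∀ u, good u → 0 < g (u, next u) := by
    intro u h; rw [hnext]; simp only [h, dif_pos]; exact h.choose_spec
  set v : ℕ → V := fun k => Nat.rec e₀.2 (fun _ u => next u) k with hv
  have vs : ∀ k, v (k + 1) = next (v k) := fun k => rfl
  have goodv : ∀ k, good (v k) := by
    intro k; induction k with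
    | zero => exact step _ ⟨e₀.1, he₀⟩
    | succ k ih => rw [vs k]; exact step _ ⟨v k, nextQ _ ih⟩
  have harc : ∀ k, 0 < g (v k, v (k + 1)) := by
    intro k; rw [vs k]; exact nextQ _ (goodv k)
  have hrep : ∃ l, ∃ k, k < l ∧ v k = v l := by
    obtain ⟨a, b, hab, heq⟩ := Finite.exists_ne_map_eq_of_infinite v
    rcases lt_or_gt_of_ne hab with h | h
    · exact ⟨b, a, h, heq⟩
    · exact ⟨a, b, h, heq.symm⟩
  obtain ⟨l, ⟨k, hkl, hvkl⟩, hminl⟩ :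
      ∃ l, (∃ k, k < l ∧ v k = v l) ∧ ∀ m, m < l → ¬ ∃ k, k < m ∧ v k = v m :=
    ⟨Nat.find hrep, Nat.find_spec hrep, fun m hm => Nat.find_min hrep hm⟩
  have hmin : ∀ a b, a < b → b < l → v a ≠ v b := by
    intro a b hab hbl he
    exact hminl b hbl ⟨a, hab, he⟩
  obtain ⟨n, hlk⟩ : ∃ n, l = k + (n + 1) := ⟨l - k - 1, by omega⟩
  set f : ZMod (n + 1) → V := fun i => v (k + i.val) with hf
  have hvlt : ∀ i : ZMod (n + 1), i.val < n + 1 := fun i => ZMod.val_lt i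
  have hfinj : Function.Injective f := by
    intro i j hij
    apply ZMod.val_injective
    by_contra hne
    have hi := hvlt i; have hj := hvlt j
    rcases Nat.lt_or_ge i.val j.val with h | h
    · exact hmin (k + i.val) (k + j.val) (by omega) (by omega) hij
    · have h' : j.val < i.val := by omega
      exact hmin (k + j.val) (k + i.val) (by omega) (by omega) hij.symm
  have hfsucc : ∀ i : ZMod (n + 1), f (i + 1) = v (k + i.val + 1) := by
    intro i
    rcases Nat.lt_or_ge i.val n with h | h
    · haveI : Fact (1 < n + 1) := ⟨by omega⟩
      have h1 : (i + 1).val = i.val + 1 := by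
        rw [ZMod.val_add_of_lt] <;> rw [ZMod.val_one] <;> omega
      show v (k + (i + 1).val) = _
      rw [h1, ← Nat.add_assoc]
    · have hin : i.val = n := by have := hvlt i; omega
      have hi : i = (n : ZMod (n + 1)) := by
        apply ZMod.val_injective
        rw [ZMod.val_cast_of_lt (by omega)]; exact hin
      have h0 : i + 1 = 0 := by
        rw [hi]; exact_mod_cast ZMod.natCast_self (n + 1)
      rw [h0]
      show v (k + (0 : ZMod (n + 1)).val) = _
      have e1 : k + (0 : ZMod (n + 1)).val = k := by simp
      have e2 : k + i.val + 1 = l := by omega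
      rw [e1, e2]; exact hvkl
  refine ⟨Finset.image (fun i => (f i, f (i + 1))) Finset.univ, ⟨n, f, hfinj, rfl⟩, ?_⟩
  intro e he
  obtain ⟨i, _, rfl⟩ := Finset.mem_image.mp he
  rw [hfsucc i]
  exact harc (k + i.val)

/-- One stripping step. -/
lemma strip_step {E : Finset (V × V)} (w : V × V → ℝ) {g : V × V → ℝ}
    (hg0 : ∀ e, 0 ≤ g e) (hsupp : ∀ e, e ∉ E → g e = 0)
    (hcons : ∀ u : V, ∑ e ∈ E.filter (fun e => e.1 = u), g e
                    = ∑ e ∈ E.filter (fun e => e.2 = u), g e)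
    {C : Finset (V × V)} (hC : IsCycle C) (hCpos : ∀ e ∈ C, 0 < g e) :
    ∃ ε : ℝ, 0 < ε ∧
      (∀ e, 0 ≤ g e - ε * chi C e) ∧ (∀ e, g e - ε * chi C e ≤ g e) ∧
      (∀ e, e ∉ E → g e - ε * chi C e = 0) ∧
      (∀ u : V, ∑ e ∈ E.filter (fun e => e.1 = u), (g e - ε * chi C e)
              = ∑ e ∈ E.filter (fun e => e.2 = u), (g e - ε * chi C e)) ∧
      (∑ e ∈ E, w e * (g e - ε * chi C e) = ∑ e ∈ E, w e * g e - ε * ∑ e ∈ C, w e) ∧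
      (Finset.univ.filter (fun e => 0 < g e - ε * chi C e)
        ⊂ Finset.univ.filter (fun e => 0 < g e)) := by
  classical
  have hCE : C ⊆ E := by
    intro e he
    by_contra h
    exact absurd (hsupp e h) (ne_of_gt (hCpos e he))
  have hCne : C.Nonempty := Finset.card_pos.mp (cycle_card_pos hC)
  obtain ⟨e₁, he₁C, he₁min⟩ := Finset.exists_min_image C g hCne
  refine ⟨g e₁, hCpos _ he₁C, ?_, ?_, ?_, ?_, ?_, ?_⟩
  · intro e
    unfold chi
    split
    · next h => have := he₁min e h; linarith
    · simp [hg0 e]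
  · intro e
    unfold chi
    have := hCpos _ he₁C
    split <;> nlinarith
  · intro e he
    have h1 : g e = 0 := hsupp e he
    have h2 : e ∉ C := fun h => he (hCE h)
    simp [chi, h1, h2]
  · intro u
    rw [Finset.sum_sub_distrib, Finset.sum_sub_distrib, ← Finset.mul_sum, ← Finset.mul_sum,
      hcons u, chi_conserv hC hCE u]
  · have hring : ∀ e ∈ E, w e * (g e - g e₁ * chi C e)
        = w e * g e - g e₁ * (w e * chi C e) := fun e _ => by ring
    rw [Finset.sum_congr rfl hring, Finset.sum_sub_distrib, ← Finset.mul_sum, sum_mul_chi hCE]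
  · constructor
    · intro e he
      simp only [Finset.mem_filter, Finset.mem_univ, true_and] at he ⊢
      have h0 : 0 ≤ g e₁ * chi C e :=
        mul_nonneg (le_of_lt (hCpos _ he₁C)) (by unfold chi; split <;> norm_num)
      linarith
    · intro hsub
      have h1 : e₁ ∈ Finset.univ.filter (fun e => 0 < g e) := by
        simp [hCpos _ he₁C]
      have h2 := hsub h1
      simp only [Finset.mem_filter, Finset.mem_univ, true_and] at h2
      unfold chi at h2; rw [if_pos he₁C] at h2; linarith

lemma exists_pos_cycle (E : Finset (V × V)) (w : V × V → ℝ) :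
    ∀ N : ℕ, ∀ g : V × V → ℝ,
    (Finset.univ.filter (fun e => 0 < g e)).card ≤ N →
    (∀ e, 0 ≤ g e) → (∀ e, e ∉ E → g e = 0) →
    (∀ u : V, ∑ e ∈ E.filter (fun e => e.1 = u), g e
            = ∑ e ∈ E.filter (fun e => e.2 = u), g e) →
    0 < ∑ e ∈ E, w e * g e →
    ∃ C : Finset (V × V), IsCycle C ∧ (∀ e ∈ C, 0 < g e) ∧ 0 < ∑ e ∈ C, w e := by
  classical
  intro N
  induction N with
  | zero =>
    intro g hcard hg0 hsupp hcons hw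
    exfalso
    have hz : ∀ e ∈ E, w e * g e = 0 := by
      intro e _
      have h1 : ¬ 0 < g e := by
        intro h
        have hm : e ∈ Finset.univ.filter (fun e => 0 < g e) := by simp [h]
        have := Finset.card_pos.mpr ⟨e, hm⟩
        omega
      have h2 : g e = 0 := le_antisymm (not_lt.mp h1) (hg0 e)
      rw [h2, mul_zero]
    rw [Finset.sum_eq_zero hz] at hw
    exact lt_irrefl _ hw
  | succ N ih =>
    intro g hcard hg0 hsupp hcons hw
    have hne : ∃ e, 0 < g e := by
      by_contra h
      push_neg at h
      have hz : ∀ e ∈ E, w e * g e = 0 := fun e _ => by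
        rw [le_antisymm (h e) (hg0 e), mul_zero]
      rw [Finset.sum_eq_zero hz] at hw
      exact lt_irrefl _ hw
    obtain ⟨e₀, he₀⟩ := hne
    obtain ⟨C, hC, hCpos⟩ := exists_cycle_supp hg0 hsupp hcons he₀
    by_cases hwc : 0 < ∑ e ∈ C, w e
    · exact ⟨C, hC, hCpos, hwc⟩
    · push_neg at hwc
      obtain ⟨ε, hε, p1, p2, p3, p4, p5, p6⟩ := strip_step w hg0 hsupp hcons hC hCpos
      set g' : V × V → ℝ := fun e => g e - ε * chi C e with hg'
      have hw' : 0 < ∑ e ∈ E, w e * g' e := by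
        rw [hg']; rw [p5]; nlinarith
      have hcard' : (Finset.univ.filter (fun e => 0 < g' e)).card ≤ N := by
        have h1 := Finset.card_lt_card p6
        have h2 : (Finset.univ.filter (fun e => 0 < g' e)).card
            = (Finset.univ.filter (fun e => 0 < g e - ε * chi C e)).card := rfl
        omega
      obtain ⟨C', h1, h2, h3⟩ := ih g' hcard' p1 p3 p4 hw'
      exact ⟨C', h1, fun e he => lt_of_lt_of_le (h2 e he) (p2 e), h3⟩
end Flow

section Combo
variable {V : Type} [Fintype V] [DecidableEq V]

lemma combo_cons {E A B : Finset (V × V)} {y : V × V → ℝ}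
    (hA : IsCycle A) (hAE : A ⊆ E) (hB : IsCycle B) (hBE : B ⊆ E)
    (hycons : ∀ u : V, ∑ e ∈ E.filter (fun e => e.1 = u), y e
                     = ∑ e ∈ E.filter (fun e => e.2 = u), y e)
    (a b c : ℝ) (u : V) :
    ∑ e ∈ E.filter (fun e => e.1 = u), (a * chi A e + b * chi B e + c * y e)
  = ∑ e ∈ E.filter (fun e => e.2 = u), (a * chi A e + b * chi B e + c * y e) := by
  rw [Finset.sum_add_distrib, Finset.sum_add_distrib, Finset.sum_add_distrib,
    Finset.sum_add_distrib, ← Finset.mul_sum, ← Finset.mul_sum, ← Finset.mul_sum,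
    ← Finset.mul_sum, ← Finset.mul_sum, ← Finset.mul_sum,
    chi_conserv hA hAE u, chi_conserv hB hBE u, hycons u]

lemma combo_w {E A B : Finset (V × V)} {y : V × V → ℝ} (w : V × V → ℝ)
    (hAE : A ⊆ E) (hBE : B ⊆ E) (a b c : ℝ) :
    ∑ e ∈ E, w e * (a * chi A e + b * chi B e + c * y e)
  = a * ∑ e ∈ A, w e + b * ∑ e ∈ B, w e + c * ∑ e ∈ E, w e * y e := by
  have h : ∀ e ∈ E, w e * (a * chi A e + b * chi B e + c * y e)
      = a * (w e * chi A e) + b * (w e * chi B e) + c * (w e * y e) := fun e _ => by ring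
  rw [Finset.sum_congr rfl h, Finset.sum_add_distrib, Finset.sum_add_distrib,
    ← Finset.mul_sum, ← Finset.mul_sum, ← Finset.mul_sum,
    sum_mul_chi hAE, sum_mul_chi hBE]

lemma combo_sum {E A B : Finset (V × V)} {y : V × V → ℝ}
    (hAE : A ⊆ E) (hBE : B ⊆ E) (a b c : ℝ) :
    ∑ e ∈ E, (a * chi A e + b * chi B e + c * y e)
  = a * A.card + b * B.card + c * ∑ e ∈ E, y e := by
  rw [Finset.sum_add_distrib, Finset.sum_add_distrib,
    ← Finset.mul_sum, ← Finset.mul_sum, ← Finset.mul_sum,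
    sum_chi_subset hAE, sum_chi_subset hBE]

end Combo

/-- every vertex of `P'(G,w)` is either `χ(C)/|C|` for a
zero-weight cycle `C`, or `μ·χ(C₁) + μ'·χ(C₂)` for a 2-cycle `(C₁, C₂)`. -/
theorem stmt_12 {V : Type} [Fintype V] [DecidableEq V]
    (E : Finset (V × V)) (w : V × V → ℝ) (y : V × V → ℝ)
    (hv : IsVertexOf {z | memP' E w z} y) :
    (∃ C : Finset (V × V), IsCycle C ∧ C ⊆ E ∧ (∑ e ∈ C, w e) = 0 ∧
        y = fun e => chi C e / C.card) ∨
    (∃ C₁ C₂ : Finset (V × V), IsTwoCycle E w C₁ C₂ ∧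
        y = fun e =>
          (∑ e ∈ C₂, w e) / ((∑ e ∈ C₂, w e) * C₁.card - (∑ e ∈ C₁, w e) * C₂.card)
            * chi C₁ e
          + (-(∑ e ∈ C₁, w e)) / ((∑ e ∈ C₂, w e) * C₁.card - (∑ e ∈ C₁, w e) * C₂.card)
            * chi C₂ e) := by
  classical
  obtain ⟨hyP, hnv⟩ := hv
  obtain ⟨hy0, hyE, hycons, hyw, hysum⟩ := hyP
  -- the perturbation principle at a vertex
  have pert : ∀ z : V × V → ℝ, (∀ e, y e = 0 → z e = 0) →
      (∀ u : V, ∑ e ∈ E.filter (fun e => e.1 = u), z e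
              = ∑ e ∈ E.filter (fun e => e.2 = u), z e) →
      (∑ e ∈ E, w e * z e = 0) → (∑ e ∈ E, z e = 0) → ∀ e, z e = 0 := by
    intro z hz0 hzcons hzw hzsum
    by_contra hz
    push_neg at hz
    obtain ⟨e', he'⟩ := hz
    set T : Finset (V × V) := Finset.univ.filter (fun e => z e ≠ 0) with hT
    have hTne : T.Nonempty := ⟨e', by simp [hT, he']⟩
    set ε : ℝ := T.inf' hTne (fun e => y e / |z e|) with hε
    have hypos : ∀ e, z e ≠ 0 → 0 < y e := by
      intro e he
      rcases lt_or_eq_of_le (hy0 e) with h | h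
      · exact h
      · exact absurd (hz0 e h.symm) he
    have hεpos : 0 < ε := by
      rw [hε, Finset.lt_inf'_iff]
      intro e he
      simp only [hT, Finset.mem_filter] at he
      exact div_pos (hypos e he.2) (abs_pos.mpr he.2)
    have hbound : ∀ e, ε * |z e| ≤ y e := by
      intro e
      by_cases h : z e = 0
      · simp [h, hy0 e]
      · have hm : e ∈ T := by simp [hT, h]
        have h1 : ε ≤ y e / |z e| := Finset.inf'_le _ hm
        have h2 : 0 < |z e| := abs_pos.mpr h
        calc ε * |z e| ≤ (y e / |z e|) * |z e| := by nlinarith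
          _ = y e := by field_simp
    have hmem : ∀ s : ℝ, (∀ e, 0 ≤ y e + s * z e) →
        memP' E w (fun e => y e + s * z e) := by
      intro s hs
      refine ⟨hs, ?_, ?_, ?_, ?_⟩
      · intro e he
        beta_reduce
        rw [hyE e he, hz0 e (hyE e he), mul_zero, add_zero]
      · intro u
        beta_reduce
        rw [Finset.sum_add_distrib, Finset.sum_add_distrib,
          ← Finset.mul_sum, ← Finset.mul_sum, hycons u, hzcons u]
      · have h : ∀ e ∈ E, w e * (y e + s * z e)
            = w e * y e + s * (w e * z e) := fun e _ => by ring
        beta_reduce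
        rw [Finset.sum_congr rfl h, Finset.sum_add_distrib, ← Finset.mul_sum,
          hyw, hzw, mul_zero, add_zero]
      · beta_reduce
        rw [Finset.sum_add_distrib, ← Finset.mul_sum, hysum, hzsum, mul_zero, add_zero]
    apply hnv
    refine ⟨(fun e => y e + ε * z e), ?_, (fun e => y e + (-ε) * z e), ?_, ?_,
      1/2, by norm_num, by norm_num, ?_⟩
    · refine hmem ε (fun e => ?_)
      have h1 := hbound e
      have h2 : -(ε * |z e|) ≤ ε * z e := by nlinarith [neg_abs_le (z e)]
      linarith
    · refine hmem (-ε) (fun e => ?_)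
      have h1 := hbound e
      have h2 : (-ε) * z e ≥ -(ε * |z e|) := by nlinarith [le_abs_self (z e)]
      linarith
    · intro h
      have h2 : y e' + ε * z e' = y e' + (-ε) * z e' := congrFun h e'
      have h3 : ε * z e' = 0 := by linarith
      exact he' ((mul_eq_zero.mp h3).resolve_left (ne_of_gt hεpos))
    · funext e
      simp only [Pi.add_apply, Pi.smul_apply, smul_eq_mul]
      ring
  -- existence of a cycle in the support of y
  have hy_ne : ∃ e, 0 < y e := by
    by_contra h
    push_neg at h
    have hz : ∑ e ∈ E, y e = 0 :=
      Finset.sum_eq_zero (fun e _ => le_antisymm (h e) (hy0 e))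
    rw [hysum] at hz
    norm_num at hz
  obtain ⟨e₀, he₀⟩ := hy_ne
  obtain ⟨C₀, hC₀, hC₀pos⟩ := exists_cycle_supp hy0 hyE hycons he₀
  have hC₀E : C₀ ⊆ E := fun e he => by
    by_contra h; exact absurd (hyE e h) (ne_of_gt (hC₀pos e he))
  -- a cycle through the support either has weight zero (case a) or we can
  -- find an opposite cycle (case b)
  have hcard₀ : (0:ℝ) < (C₀.card : ℝ) := by exact_mod_cast cycle_card_pos hC₀
  -- general "combine" step
  have combine : ∀ Cn Cp : Finset (V × V), IsCycle Cn → IsCycle Cp →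
      (∀ e ∈ Cn, 0 < y e) → (∀ e ∈ Cp, 0 < y e) →
      (∑ e ∈ Cn, w e) < 0 → 0 < (∑ e ∈ Cp, w e) →
      (∃ C₁ C₂ : Finset (V × V), IsTwoCycle E w C₁ C₂ ∧
        y = fun e =>
          (∑ e ∈ C₂, w e) / ((∑ e ∈ C₂, w e) * C₁.card - (∑ e ∈ C₁, w e) * C₂.card)
            * chi C₁ e
          + (-(∑ e ∈ C₁, w e)) / ((∑ e ∈ C₂, w e) * C₁.card - (∑ e ∈ C₁, w e) * C₂.card)
            * chi C₂ e) := by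
    intro Cn Cp hCn hCp hCnpos hCppos hwn hwp
    have hCnE : Cn ⊆ E := fun e he => by
      by_contra h; exact absurd (hyE e h) (ne_of_gt (hCnpos e he))
    have hCpE : Cp ⊆ E := fun e he => by
      by_contra h; exact absurd (hyE e h) (ne_of_gt (hCppos e he))
    have hcardn : (0:ℝ) < (Cn.card : ℝ) := by exact_mod_cast cycle_card_pos hCn
    have hcardp : (0:ℝ) < (Cp.card : ℝ) := by exact_mod_cast cycle_card_pos hCp
    have hD : 0 < (∑ e ∈ Cp, w e) * Cn.card - (∑ e ∈ Cn, w e) * Cp.card := by nlinarith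
    have hz := pert (fun e => (∑ e ∈ Cp, w e) * chi Cn e + (-(∑ e ∈ Cn, w e)) * chi Cp e
        + (-((∑ e ∈ Cp, w e) * Cn.card - (∑ e ∈ Cn, w e) * Cp.card)) * y e)
      (fun e he => by
        have h1 : e ∉ Cn := fun h => absurd he (ne_of_gt (hCnpos e h))
        have h2 : e ∉ Cp := fun h => absurd he (ne_of_gt (hCppos e h))
        simp [chi, h1, h2, he])
      (combo_cons hCn hCnE hCp hCpE hycons _ _ _)
      (by rw [combo_w w hCnE hCpE, hyw]; ring)
      (by rw [combo_sum hCnE hCpE, hysum]; ring)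
    have hyf : ∀ e, y e
        = (∑ e ∈ Cp, w e) / ((∑ e ∈ Cp, w e) * Cn.card - (∑ e ∈ Cn, w e) * Cp.card)
            * chi Cn e
          + (-(∑ e ∈ Cn, w e)) / ((∑ e ∈ Cp, w e) * Cn.card - (∑ e ∈ Cn, w e) * Cp.card)
            * chi Cp e := by
      intro e
      have h1 := hz e
      beta_reduce at h1
      field_simp
      linarith
    refine ⟨Cn, Cp, ⟨hCn, hCp, hCnE, hCpE, hwn, hwp, ?_⟩, funext hyf⟩
    -- minimality: no third cycle in the union
    intro C hC hCsub
    have hCposy : ∀ e ∈ C, 0 < y e := by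
      intro e he
      rcases Finset.mem_union.mp (hCsub he) with h | h
      exacts [hCnpos e h, hCppos e h]
    have hCE : C ⊆ E := fun e he => by
      by_contra h; exact absurd (hyE e h) (ne_of_gt (hCposy e he))
    have hcardC : (0:ℝ) < (C.card : ℝ) := by exact_mod_cast cycle_card_pos hC
    rcases lt_trichotomy (∑ e ∈ C, w e) 0 with hc | hc | hc
    · -- negative weight: C = Cn
      left
      have hz2 := pert (fun e => (∑ e ∈ C, w e) * chi Cn e + (-(∑ e ∈ Cn, w e)) * chi C e
          + (-((∑ e ∈ C, w e) * Cn.card - (∑ e ∈ Cn, w e) * C.card)) * y e)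
        (fun e he => by
          have h1 : e ∉ Cn := fun h => absurd he (ne_of_gt (hCnpos e h))
          have h2 : e ∉ C := fun h => absurd he (ne_of_gt (hCposy e h))
          simp [chi, h1, h2, he])
        (combo_cons hCn hCnE hC hCE hycons _ _ _)
        (by rw [combo_w w hCnE hCE, hyw]; ring)
        (by rw [combo_sum hCnE hCE, hysum]; ring)
      by_cases hnc : Cn ⊆ C
      · exact (cycle_subset hCn hC hnc).symm
      · obtain ⟨e₁, he₁n, he₁c⟩ := Finset.not_subset.mp hnc
        have hΔ : (∑ e ∈ C, w e) * Cn.card - (∑ e ∈ Cn, w e) * C.card < 0 := by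
          have h1 := hz2 e₁
          simp only [chi, if_pos he₁n, if_neg he₁c, mul_one, mul_zero, add_zero] at h1
          nlinarith [hCnpos e₁ he₁n]
        have hcsub : C ⊆ Cn := by
          intro e₂ he₂
          by_contra h'
          have h1 := hz2 e₂
          simp only [chi, if_neg h', if_pos he₂, mul_one, mul_zero, zero_add] at h1
          nlinarith [hCposy e₂ he₂]
        exact cycle_subset hC hCn hcsub
    · -- zero weight: contradiction
      exfalso
      have hz2 := pert (fun e => (1:ℝ) * chi C e + (0:ℝ) * chi C e
          + (-(C.card : ℝ)) * y e)
        (fun e he => by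
          have h2 : e ∉ C := fun h => absurd he (ne_of_gt (hCposy e h))
          simp [chi, h2, he])
        (combo_cons hC hCE hC hCE hycons _ _ _)
        (by rw [combo_w w hCE hCE, hyw, hc]; ring)
        (by rw [combo_sum hCE hCE, hysum]; ring)
      have hCnC : Cn ⊆ C := by
        intro e he
        by_contra h'
        have h1 := hz2 e
        simp only [chi, if_neg h', mul_zero, zero_add, mul_one, add_zero] at h1
        have h2 := hCnpos e he
        nlinarith
      have := cycle_subset hCn hC hCnC
      rw [← this] at hc
      exact absurd hc (ne_of_lt hwn)
    · -- positive weight: C = Cp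
      right
      have hz2 := pert (fun e => (∑ e ∈ C, w e) * chi Cp e + (-(∑ e ∈ Cp, w e)) * chi C e
          + (-((∑ e ∈ C, w e) * Cp.card - (∑ e ∈ Cp, w e) * C.card)) * y e)
        (fun e he => by
          have h1 : e ∉ Cp := fun h => absurd he (ne_of_gt (hCppos e h))
          have h2 : e ∉ C := fun h => absurd he (ne_of_gt (hCposy e h))
          simp [chi, h1, h2, he])
        (combo_cons hCp hCpE hC hCE hycons _ _ _)
        (by rw [combo_w w hCpE hCE, hyw]; ring)
        (by rw [combo_sum hCpE hCE, hysum]; ring)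
      by_cases hpc : Cp ⊆ C
      · exact (cycle_subset hCp hC hpc).symm
      · obtain ⟨e₁, he₁p, he₁c⟩ := Finset.not_subset.mp hpc
        have hΔ : 0 < (∑ e ∈ C, w e) * Cp.card - (∑ e ∈ Cp, w e) * C.card := by
          have h1 := hz2 e₁
          simp only [chi, if_pos he₁p, if_neg he₁c, mul_one, mul_zero, add_zero] at h1
          nlinarith [hCppos e₁ he₁p]
        have hcsub : C ⊆ Cp := by
          intro e₂ he₂
          by_contra h'
          have h1 := hz2 e₂
          simp only [chi, if_neg h', if_pos he₂, mul_one, mul_zero, zero_add] at h1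
          nlinarith [hCposy e₂ he₂]
        exact cycle_subset hC hCp hcsub
  -- trichotomy on the weight of C₀
  rcases lt_trichotomy (∑ e ∈ C₀, w e) 0 with hneg | hzero | hpos
  · -- find a positive cycle and combine
    right
    obtain ⟨ε, hε, p1, p2, p3, p4, p5, p6⟩ := strip_step w hy0 hyE hycons hC₀ hC₀pos
    have hw' : 0 < ∑ e ∈ E, w e * (y e - ε * chi C₀ e) := by
      rw [p5, hyw]; nlinarith
    obtain ⟨Cp, hCp, hCppos', hwp⟩ := exists_pos_cycle E w
      (Finset.univ.filter (fun e => 0 < y e - ε * chi C₀ e)).card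
      (fun e => y e - ε * chi C₀ e) le_rfl p1 p3 p4 hw'
    exact combine C₀ Cp hC₀ hCp hC₀pos
      (fun e he => lt_of_lt_of_le (hCppos' e he) (p2 e)) hneg hwp
  · -- zero-weight cycle: case (a)
    left
    refine ⟨C₀, hC₀, hC₀E, hzero, ?_⟩
    have hz := pert (fun e => (1:ℝ) * chi C₀ e + (0:ℝ) * chi C₀ e
        + (-(C₀.card : ℝ)) * y e)
      (fun e he => by
        have h2 : e ∉ C₀ := fun h => absurd he (ne_of_gt (hC₀pos e h))
        simp [chi, h2, he])
      (combo_cons hC₀ hC₀E hC₀ hC₀E hycons _ _ _)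
      (by rw [combo_w w hC₀E hC₀E, hyw, hzero]; ring)
      (by rw [combo_sum hC₀E hC₀E, hysum]; ring)
    funext e
    have h1 := hz e
    beta_reduce at h1
    rw [eq_div_iff (ne_of_gt hcard₀)]
    linarith
  · -- find a negative cycle and combine
    right
    obtain ⟨ε, hε, p1, p2, p3, p4, p5, p6⟩ :=
      strip_step (fun e => - w e) hy0 hyE hycons hC₀ hC₀pos
    have hyw' : ∑ e ∈ E, (fun e => - w e) e * y e = 0 := by
      simp only [neg_mul]
      rw [Finset.sum_neg_distrib, hyw, neg_zero]
    have hw' : 0 < ∑ e ∈ E, (fun e => - w e) e * (y e - ε * chi C₀ e) := by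
      rw [p5, hyw']
      have : ∑ e ∈ C₀, (fun e => - w e) e = - ∑ e ∈ C₀, w e := by
        rw [← Finset.sum_neg_distrib]
      rw [this]
      nlinarith
    obtain ⟨Cn, hCn, hCnpos', hwn'⟩ := exists_pos_cycle E (fun e => - w e)
      (Finset.univ.filter (fun e => 0 < y e - ε * chi C₀ e)).card
      (fun e => y e - ε * chi C₀ e) le_rfl p1 p3 p4 hw'
    have hwn : ∑ e ∈ Cn, w e < 0 := by
      have h1 : ∑ e ∈ Cn, (fun e => - w e) e = - ∑ e ∈ Cn, w e := by
        rw [← Finset.sum_neg_distrib]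
      rw [h1] at hwn'
      linarith
    exact combine Cn C₀ hCn hC₀
      (fun e he => lt_of_lt_of_le (hCnpos' e he) (p2 e)) hC₀pos hwn hpos
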